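/- The triple (kF_X^a, ⋄_a, B⁺) is a (non-commutative) unitary Rota-Baxter algebra of weight λ with unit the single-vertex tree •: the operation ⋄_a is a well-defined associative k-bilinear multiplication on kF_X^a with two-sided unit •, and the grafting operator B⁺ satisfies B⁺(F) ⋄_a B⁺(F') = B⁺(F ⋄_a B⁺(F')) + B⁺(B⁺(F) ⋄_a F') + λ B⁺(F ⋄_a F') for all F, F' ∈ kF_X^a. -/

import Mathlib

set_option linter.unreachableTactic false
set_option linter.unnecessarySeqFocus false
set_option linter.unusedTactic false

/-! Angularly decorated planar rooted trees and forests over a decoration set `X`.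
A tree is either the single-vertex tree `•` (leaf) or the grafting `B⁺(F)` of a forest;
a forest is an alternating word `T₁ x₁ T₂ x₂ ⋯ x_{ℓ-1} T_ℓ` of trees and decorations. -/
mutual
  inductive ATree (X : Type) : Type
    | leaf : ATree X
    | graft : AForest X → ATree X
  inductive AForest (X : Type) : Type
    | single : ATree X → AForest X
    | cons : ATree X → X → AForest X → AForest X
end

mutual
  /-- Depth of an angularly decorated tree. -/
  def ATree.depth {X : Type} : ATree X → ℕ
    | .leaf => 0
    | .graft F => AForest.depth F + 1
  /-- Depth of an angularly decorated forest. -/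
  def AForest.depth {X : Type} : AForest X → ℕ
    | .single T => ATree.depth T
    | .cons T _ F => max (ATree.depth T) (AForest.depth F)
end

mutual
  /-- An auxiliary size of an angularly decorated tree. -/
  def ATree.size {X : Type} : ATree X → ℕ
    | .leaf => 1
    | .graft F => AForest.size F + 1
  /-- An auxiliary size of an angularly decorated forest. -/
  def AForest.size {X : Type} : AForest X → ℕ
    | .single T => ATree.size T + 1
    | .cons T _ F => ATree.size T + AForest.size F + 1
end

mutual
  /-- The number of vertices of an angularly decorated tree. -/
  def ATree.deg {X : Type} : ATree X → ℕ
    | .leaf => 1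
    | .graft F => AForest.deg F + 1
  /-- The number of vertices of an angularly decorated forest. -/
  def AForest.deg {X : Type} : AForest X → ℕ
    | .single T => ATree.deg T
    | .cons T _ F => ATree.deg T + AForest.deg F
end

/-- Auxiliary lemma for termination proofs. -/
theorem natlex_of_le_of_lt {a₁ a₂ b₁ b₂ : ℕ} (h1 : a₁ ≤ a₂) (h2 : b₁ < b₂) :
    Prod.Lex (fun x y : ℕ => x < y) (fun x y : ℕ => x < y) (a₁, b₁) (a₂, b₂) := by
  rcases lt_or_eq_of_le h1 with h | rfl
  · exact Prod.Lex.left _ _ h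
  · exact Prod.Lex.right _ h2

/-- `RBF k X` is the free `k`-module on the set of angularly decorated rooted forests. -/
abbrev RBF (k X : Type) [CommRing k] := AForest X →₀ k

mutual
  /-- The product `⋄ₐ` on basis trees (with values in the free module on trees). -/
  noncomputable def mulT {k X : Type} [CommRing k] (lam : k) :
      ATree X → ATree X → (ATree X →₀ k)
    | .leaf, T' => Finsupp.single T' 1
    | T, .leaf => Finsupp.single T 1
    | .graft F, .graft F' =>
        Finsupp.mapDomain ATree.graft (mulF lam (.single (.graft F)) F')
          + Finsupp.mapDomain ATree.graft (mulF lam F (.single (.graft F')))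
          + lam • Finsupp.mapDomain ATree.graft (mulF lam F F')
  termination_by T T' => (ATree.depth T + ATree.depth T', ATree.size T + ATree.size T')
  decreasing_by
    all_goals
      first
        | (apply Prod.Lex.left
           simp [ATree.depth, AForest.depth] <;> omega)
        | (apply natlex_of_le_of_lt <;>
            simp [ATree.depth, AForest.depth, ATree.size, AForest.size] <;>
            omega)
  /-- The product `⋄ₐ` on basis forests. -/
  noncomputable def mulF {k X : Type} [CommRing k] (lam : k) :
      AForest X → AForest X → RBF k X
    | .single T, .single T' => Finsupp.mapDomain AForest.single (mulT lam T T')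
    | .single T, .cons T' y G' =>
        Finsupp.mapDomain (fun t => AForest.cons t y G') (mulT lam T T')
    | .cons T x G, F' => Finsupp.mapDomain (fun g => AForest.cons T x g) (mulF lam G F')
  termination_by F F' => (AForest.depth F + AForest.depth F', AForest.size F + AForest.size F')
  decreasing_by
    all_goals
      first
        | (apply Prod.Lex.left
           simp [ATree.depth, AForest.depth] <;> omega)
        | (apply natlex_of_le_of_lt <;>
            simp [ATree.depth, AForest.depth, ATree.size, AForest.size] <;>
            omega)
end

open scoped TensorProduct

variable {k X : Type} [CommRing k]

/-- The unit `•` of the Rota-Baxter algebra `kF_X^a`: the single-vertex tree. -/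
noncomputable def RBF.one : RBF k X := Finsupp.single (AForest.single ATree.leaf) 1

/-- The canonical basis inclusion of forests into `kF_X^a`. -/
noncomputable def RBF.of (F : AForest X) : RBF k X := Finsupp.single F 1

/-- The natural map `i_X : X → kF_X^a`, `x ↦ • x •`. -/
noncomputable def RBF.iX (x : X) : RBF k X :=
  RBF.of (AForest.cons ATree.leaf x (AForest.single ATree.leaf))

/-- The grafting operator `B⁺` as a `k`-linear operator on `kF_X^a`. -/
noncomputable def RBF.Bplus : RBF k X →ₗ[k] RBF k X :=
  Finsupp.lmapDomain k k (fun F => AForest.single (ATree.graft F))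

/-- The multiplication `⋄ₐ` on `kF_X^a` as a `k`-bilinear map. -/
noncomputable def RBF.mul (lam : k) : RBF k X →ₗ[k] RBF k X →ₗ[k] RBF k X :=
  Finsupp.lift _ k _ fun F => Finsupp.lift _ k _ fun F' => mulF lam F F'

/-- Concatenation of two forests with the angle between them decorated by `x`. -/
def concatA (x : X) : AForest X → AForest X → AForest X
  | .single T, F' => .cons T x F'
  | .cons T y G, F' => .cons T y (concatA x G F')

/-- Concatenation with middle angle decorated by `x`, as a bilinear map on `kF_X^a`. -/
noncomputable def RBF.concat (x : X) : RBF k X →ₗ[k] RBF k X →ₗ[k] RBF k X :=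
  Finsupp.lift _ k _ fun F => Finsupp.lift _ k _ fun F' => RBF.of (concatA x F F')

/-- Given two bilinear maps `f g` on a module `M`, the bilinear map on `M ⊗ M` sending
`(a ⊗ b, c ⊗ d)` to `f a c ⊗ g b d`. -/
noncomputable def mixMap {M : Type} [AddCommGroup M] [Module k M]
    (f g : M →ₗ[k] M →ₗ[k] M) :
    (M ⊗[k] M) →ₗ[k] (M ⊗[k] M) →ₗ[k] (M ⊗[k] M) :=
  TensorProduct.curry
    ((TensorProduct.map (TensorProduct.lift f) (TensorProduct.lift g)).comp
      (TensorProduct.tensorTensorTensorComm k M M M M).toLinearMap)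

mutual
  /-- The angular coproduct of a basis tree: the sum of `cl(H) ⊗ T/H` over all
  subforests `H ⊑ T` (sequences of mutually disjoint full subtrees and bare angular
  decorations in planar order). -/
  noncomputable def coT (lam : k) : ATree X → RBF k X ⊗[k] RBF k X
    | .leaf => RBF.one ⊗ₜ[k] RBF.one
    | .graft F => (RBF.of (AForest.single (ATree.graft F))) ⊗ₜ[k] RBF.one
        + (LinearMap.lTensor (RBF k X) RBF.Bplus) (coF lam F)
  /-- The angular coproduct of a basis forest: the sum of `cl(H) ⊗ F/H` over all
  subforests `H ⊑ F`. -/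
  noncomputable def coF (lam : k) : AForest X → RBF k X ⊗[k] RBF k X
    | .single T => coT lam T
    | .cons T x G =>
        mixMap (RBF.concat x) (RBF.mul lam) (coT lam T) (coF lam G)
          + mixMap (RBF.mul lam) (RBF.concat x) (coT lam T) (coF lam G)
end

/-- The angular coproduct `Δₐ : kF_X^a → kF_X^a ⊗ kF_X^a`,
`Δₐ(F) = Σ_{H ⊑ F} cl(H) ⊗ F/H`. -/
noncomputable def RBF.Delta (lam : k) : RBF k X →ₗ[k] RBF k X ⊗[k] RBF k X :=
  Finsupp.lift _ k _ fun F => coF lam F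

/-- The counit `εₐ : kF_X^a → k` sending the single-vertex tree `•` to `1` and every
other forest to `0`. -/
noncomputable def RBF.eps : RBF k X →ₗ[k] k :=
  Finsupp.lift _ k _ fun F =>
    match F with
    | .single .leaf => (1 : k)
    | _ => 0

/-- The unit map `u : k → kF_X^a`, `c ↦ c •`. -/
noncomputable def RBF.unit : k →ₗ[k] RBF k X :=
  LinearMap.toSpanSingleton k (RBF k X) RBF.one

/-! ### Auxiliary lemmas for the proof -/

theorem AForest.size_pos {X : Type} (F : AForest X) : 0 < AForest.size F := by
  cases F <;> simp [AForest.size]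

section BasicLemmas
variable {k X : Type} [CommRing k]

theorem mul_of_of (lam : k) (F G : AForest X) :
    RBF.mul lam (RBF.of F) (RBF.of G) = mulF lam F G := by
  simp [RBF.mul, RBF.of, Finsupp.lift_apply, Finsupp.sum_single_index]

theorem Bplus_of (F : AForest X) :
    RBF.Bplus (k:=k) (RBF.of F) = RBF.of (AForest.single (ATree.graft F)) := by
  simp [RBF.Bplus, RBF.of, Finsupp.lmapDomain_apply, Finsupp.mapDomain_single]

theorem concat_of_of (x : X) (F G : AForest X) :
    RBF.concat (k:=k) x (RBF.of F) (RBF.of G) = RBF.of (concatA x F G) := by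
  simp [RBF.concat, RBF.of, Finsupp.lift_apply, Finsupp.sum_single_index]

theorem single_eq_smul_of (F : AForest X) (c : k) :
    (Finsupp.single F c : RBF k X) = c • RBF.of F := by
  simp [RBF.of, Finsupp.smul_single]

theorem mulT_l (lam : k) (T' : ATree X) :
    mulT (k:=k) lam .leaf T' = Finsupp.single T' 1 := by rw [mulT]

theorem mulT_r (lam : k) (T : ATree X) :
    mulT (k:=k) lam T .leaf = Finsupp.single T 1 := by
  cases T with
  | leaf => rw [mulT]
  | graft F => rw [mulT] <;> simp

theorem mulT_gg (lam : k) (F F' : AForest X) :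
    mulT (k:=k) lam (.graft F) (.graft F') =
      Finsupp.mapDomain ATree.graft (mulF lam (.single (.graft F)) F')
        + Finsupp.mapDomain ATree.graft (mulF lam F (.single (.graft F')))
        + lam • Finsupp.mapDomain ATree.graft (mulF lam F F') := by
  rw [mulT]

theorem mulF_ss (lam : k) (T T' : ATree X) :
    mulF (k:=k) lam (.single T) (.single T')
      = Finsupp.mapDomain AForest.single (mulT lam T T') := by rw [mulF]

theorem mulF_sc (lam : k) (T T' : ATree X) (y : X) (G' : AForest X) :
    mulF (k:=k) lam (.single T) (.cons T' y G')
      = Finsupp.mapDomain (fun t => AForest.cons t y G') (mulT lam T T') := by rw [mulF]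

theorem mulF_c (lam : k) (T : ATree X) (x : X) (G F' : AForest X) :
    mulF (k:=k) lam (.cons T x G) F'
      = Finsupp.mapDomain (fun g => AForest.cons T x g) (mulF lam G F') := by rw [mulF]

/-- `concat x (of (single T))` is `mapDomain (cons T x)`. -/
theorem concat_single_left (x : X) (T : ATree X) (v : RBF k X) :
    RBF.concat x (RBF.of (AForest.single T)) v
      = Finsupp.mapDomain (AForest.cons T x) v := by
  induction v using Finsupp.induction_linear with
  | zero => simp
  | add f g hf hg => rw [map_add, hf, hg, Finsupp.mapDomain_add]
  | single F c =>
      simp only [single_eq_smul_of, map_smul, concat_of_of, Finsupp.mapDomain_smul]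
      rw [show concatA x (AForest.single T) F = AForest.cons T x F from rfl]
      simp only [RBF.of, Finsupp.mapDomain_single]

theorem concat_mapDomain_single (y : X) (G' : AForest X) (u : ATree X →₀ k) :
    RBF.concat y (Finsupp.mapDomain AForest.single u) (RBF.of G')
      = Finsupp.mapDomain (fun t => AForest.cons t y G') u := by
  induction u using Finsupp.induction_linear with
  | zero => simp
  | add f g hf hg =>
      rw [Finsupp.mapDomain_add, map_add, LinearMap.add_apply, hf, hg, Finsupp.mapDomain_add]
  | single T c =>
      rw [Finsupp.mapDomain_single, Finsupp.mapDomain_single, single_eq_smul_of,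
        map_smul, LinearMap.smul_apply, concat_of_of, single_eq_smul_of]
      rfl
end BasicLemmas

theorem concatA_assoc {X : Type} (x z : X) (F G H : AForest X) :
    concatA z (concatA x F G) H = concatA x F (concatA z G H) := by
  match F with
  | .single T => rfl
  | .cons T w F0 => simp [concatA, concatA_assoc x z F0 G H]
termination_by AForest.size F
decreasing_by simp [AForest.size]

section LinLemmas
variable {k X : Type} [CommRing k]

theorem concat_assoc (x z : X) (u v w : RBF k X) :
    RBF.concat z (RBF.concat x u v) w = RBF.concat x u (RBF.concat z v w) := by
  induction u using Finsupp.induction_linear with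
  | zero => simp
  | add f g hf hg => simp only [map_add, LinearMap.add_apply, hf, hg]
  | single F c =>
    induction v using Finsupp.induction_linear with
    | zero => simp
    | add f g hf hg => simp only [map_add, LinearMap.add_apply, hf, hg]
    | single G d =>
      induction w using Finsupp.induction_linear with
      | zero => simp
      | add f g hf hg => simp only [map_add, hf, hg]
      | single H e =>
        simp only [single_eq_smul_of, map_smul, LinearMap.smul_apply, concat_of_of,
          concatA_assoc]

/-- Left unit law on basis forests. -/
theorem mulF_one_left (lam : k) (F : AForest X) :
    mulF (k:=k) lam (.single .leaf) F = Finsupp.single F 1 := by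
  cases F with
  | single T => rw [mulF_ss, mulT_l, Finsupp.mapDomain_single]
  | cons T y G => rw [mulF_sc, mulT_l, Finsupp.mapDomain_single]

theorem mul_one_left (lam : k) (w : RBF k X) : RBF.mul lam RBF.one w = w := by
  have h1 : (RBF.one : RBF k X) = RBF.of (.single .leaf) := rfl
  induction w using Finsupp.induction_linear with
  | zero => simp
  | add f g hf hg => rw [map_add, hf, hg]
  | single F c =>
      rw [h1, single_eq_smul_of, map_smul, mul_of_of, mulF_one_left, single_eq_smul_of,
        one_smul]
end LinLemmas

/-- Right unit law on basis forests. -/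
theorem mulF_one_right {k X : Type} [CommRing k] (lam : k) (F : AForest X) :
    mulF lam F (.single .leaf) = Finsupp.single F 1 := by
  match F with
  | .single T => rw [mulF_ss, mulT_r, Finsupp.mapDomain_single]
  | .cons T x G => rw [mulF_c, mulF_one_right lam G, Finsupp.mapDomain_single]
termination_by AForest.size F
decreasing_by simp [AForest.size]

section LinLemmas2
variable {k X : Type} [CommRing k]

theorem mul_one_right (lam : k) (w : RBF k X) : RBF.mul lam w RBF.one = w := by
  have h1 : (RBF.one : RBF k X) = RBF.of (.single .leaf) := rfl
  induction w using Finsupp.induction_linear with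
  | zero => simp
  | add f g hf hg => rw [map_add, LinearMap.add_apply, hf, hg]
  | single F c =>
      rw [h1, single_eq_smul_of, map_smul, LinearMap.smul_apply, mul_of_of,
        mulF_one_right, single_eq_smul_of, one_smul]

/-- Peeling off the first tree of the left factor. -/
theorem mul_cons_left (lam : k) (T : ATree X) (x : X) (G : AForest X) (w : RBF k X) :
    RBF.mul lam (RBF.of (.cons T x G)) w
      = RBF.concat x (RBF.of (.single T)) (RBF.mul lam (RBF.of G) w) := by
  induction w using Finsupp.induction_linear with
  | zero => simp
  | add f g hf hg => simp only [map_add, LinearMap.add_apply, hf, hg]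
  | single F c =>
      rw [single_eq_smul_of, map_smul, map_smul, mul_of_of, mul_of_of, mulF_c,
        concat_single_left, Finsupp.mapDomain_smul]

/-- `mul` commutes with prepending a tree on the left factor (linear version). -/
theorem mul_consmap_left (lam : k) (T : ATree X) (x : X) (v w : RBF k X) :
    RBF.mul lam (RBF.concat x (RBF.of (AForest.single T)) v) w
      = RBF.concat x (RBF.of (AForest.single T)) (RBF.mul lam v w) := by
  induction v using Finsupp.induction_linear with
  | zero => simp
  | add f g hf hg => simp only [map_add, LinearMap.add_apply, hf, hg]
  | single F c =>
      simp only [single_eq_smul_of, map_smul, LinearMap.smul_apply, concat_of_of]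
      rw [show concatA x (AForest.single T) F = AForest.cons T x F from rfl, mul_cons_left]

/-- Multiplication of a single tree with a forest starting with `T'`. -/
theorem mul_single_cons (lam : k) (T T' : ATree X) (y : X) (G' : AForest X) :
    RBF.mul lam (RBF.of (AForest.single T)) (RBF.of (.cons T' y G'))
      = RBF.concat y
          (RBF.mul lam (RBF.of (AForest.single T)) (RBF.of (AForest.single T')))
          (RBF.of G') := by
  rw [mul_of_of, mul_of_of, mulF_sc, mulF_ss, concat_mapDomain_single]
end LinLemmas2

/-- Peeling off the tail of the right factor, on basis forests. -/
theorem mulF_cons_right {k X : Type} [CommRing k] (lam : k) (F : AForest X)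
    (T'' : ATree X) (z : X) (H0 : AForest X) :
    mulF lam F (.cons T'' z H0)
      = RBF.concat z (mulF lam F (.single T'')) (RBF.of H0) := by
  match F with
  | .single T => rw [mulF_sc, mulF_ss, concat_mapDomain_single]
  | .cons T x G =>
      rw [mulF_c, mulF_c, mulF_cons_right lam G T'' z H0, ← concat_single_left,
        ← concat_single_left, concat_assoc]
termination_by AForest.size F
decreasing_by simp [AForest.size]

section LinLemmas3
variable {k X : Type} [CommRing k]

theorem mul_cons_right (lam : k) (v : RBF k X) (T'' : ATree X) (z : X) (H0 : AForest X) :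
    RBF.mul lam v (RBF.of (.cons T'' z H0))
      = RBF.concat z (RBF.mul lam v (RBF.of (.single T''))) (RBF.of H0) := by
  induction v using Finsupp.induction_linear with
  | zero => simp
  | add f g hf hg => simp only [map_add, LinearMap.add_apply, hf, hg]
  | single F c =>
      rw [single_eq_smul_of, map_smul, LinearMap.smul_apply, LinearMap.smul_apply,
        map_smul, LinearMap.smul_apply, mul_of_of, mul_of_of, mulF_cons_right]

theorem mul_single_concatA (lam : k) (T : ATree X) (z : X) (F H : AForest X) :
    RBF.mul lam (RBF.of (AForest.single T)) (RBF.of (concatA z F H))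
      = RBF.concat z
          (RBF.mul lam (RBF.of (AForest.single T)) (RBF.of F)) (RBF.of H) := by
  match F with
  | .single T'' =>
      rw [show concatA z (AForest.single T'') H = AForest.cons T'' z H from rfl,
        mul_single_cons]
  | .cons T'' y G'' =>
      rw [show concatA z (AForest.cons T'' y G'') H
          = AForest.cons T'' y (concatA z G'' H) from rfl,
        mul_single_cons, mul_single_cons, ← concat_of_of z G'' H, ← concat_assoc]

theorem mul_single_concat (lam : k) (T : ATree X) (z : X) (v w : RBF k X) :
    RBF.mul lam (RBF.of (AForest.single T)) (RBF.concat z v w)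
      = RBF.concat z (RBF.mul lam (RBF.of (AForest.single T)) v) w := by
  induction v using Finsupp.induction_linear with
  | zero => simp
  | add f g hf hg => simp only [map_add, LinearMap.add_apply, hf, hg]
  | single F c =>
    induction w using Finsupp.induction_linear with
    | zero => simp
    | add f g hf hg => simp only [map_add, LinearMap.add_apply, hf, hg]
    | single H e =>
      simp only [single_eq_smul_of, map_smul, LinearMap.smul_apply, concat_of_of,
        mul_single_concatA]
      try module
end LinLemmas3

/-- Left multiplication by a concatenation, basis version. -/
theorem mul_concatA_left {k X : Type} [CommRing k] (lam : k) (y : X)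
    (F'' G0 H : AForest X) :
    RBF.mul lam (RBF.of (concatA y F'' G0)) (RBF.of H)
      = RBF.concat y (RBF.of F'') (RBF.mul lam (RBF.of G0) (RBF.of H)) := by
  match F'' with
  | .single t =>
      rw [show concatA y (AForest.single t) G0 = AForest.cons t y G0 from rfl,
        mul_cons_left]
  | .cons t w G =>
      rw [show concatA y (AForest.cons t w G) G0
          = AForest.cons t w (concatA y G G0) from rfl,
        mul_cons_left, mul_concatA_left lam y G G0 H, ← concat_assoc, concat_of_of]
      rfl
termination_by AForest.size F''
decreasing_by simp [AForest.size]

section LinLemmas4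
variable {k X : Type} [CommRing k]

theorem mul_concat_left (lam : k) (y : X) (v : RBF k X) (G0 : AForest X) (h : RBF k X) :
    RBF.mul lam (RBF.concat y v (RBF.of G0)) h
      = RBF.concat y v (RBF.mul lam (RBF.of G0) h) := by
  induction v using Finsupp.induction_linear with
  | zero => simp
  | add f g hf hg => simp only [map_add, LinearMap.add_apply, hf, hg]
  | single F c =>
    induction h using Finsupp.induction_linear with
    | zero => simp
    | add f g hf hg => simp only [map_add, LinearMap.add_apply, hf, hg]
    | single H e =>
      simp only [single_eq_smul_of, map_smul, LinearMap.smul_apply, concat_of_of,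
        mul_concatA_left]
      try module

/-- The Rota–Baxter identity on basis elements. -/
theorem rb_basis (lam : k) (A B : AForest X) :
    RBF.mul lam (RBF.Bplus (RBF.of A)) (RBF.Bplus (RBF.of B))
      = RBF.Bplus (RBF.mul lam (RBF.of A) (RBF.Bplus (RBF.of B)))
        + RBF.Bplus (RBF.mul lam (RBF.Bplus (RBF.of A)) (RBF.of B))
        + lam • RBF.Bplus (RBF.mul lam (RBF.of A) (RBF.of B)) := by
  have hBp : ∀ w : AForest X →₀ k,
      Finsupp.mapDomain AForest.single (Finsupp.mapDomain ATree.graft w)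
        = RBF.Bplus (k:=k) w := by
    intro w
    rw [RBF.Bplus, Finsupp.lmapDomain_apply, ← Finsupp.mapDomain_comp]
    rfl
  rw [Bplus_of, Bplus_of, mul_of_of, mul_of_of, mul_of_of, mul_of_of, mulF_ss, mulT_gg,
    Finsupp.mapDomain_add, Finsupp.mapDomain_add, Finsupp.mapDomain_smul,
    hBp, hBp, hBp]
  abel

/-- The Rota–Baxter identity. -/
theorem rb (lam : k) (a b : RBF k X) :
    RBF.mul lam (RBF.Bplus a) (RBF.Bplus b)
      = RBF.Bplus (RBF.mul lam a (RBF.Bplus b))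
        + RBF.Bplus (RBF.mul lam (RBF.Bplus a) b)
        + lam • RBF.Bplus (RBF.mul lam a b) := by
  induction a using Finsupp.induction_linear with
  | zero => simp
  | add f g hf hg =>
      simp only [map_add, LinearMap.add_apply, hf, hg, smul_add]
      abel
  | single F c =>
    induction b using Finsupp.induction_linear with
    | zero => simp
    | add f g hf hg =>
        simp only [map_add, LinearMap.add_apply, hf, hg, smul_add]
        abel
    | single G d =>
        simp only [single_eq_smul_of, map_smul, LinearMap.smul_apply, rb_basis,
          smul_add, smul_smul]
        module
end LinLemmas4

/-- Associativity of `⋄ₐ` on basis forests. -/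
theorem assoc_basis {k X : Type} [CommRing k] (lam : k) (F G H : AForest X) :
    RBF.mul lam (RBF.mul lam (RBF.of F) (RBF.of G)) (RBF.of H)
      = RBF.mul lam (RBF.of F) (RBF.mul lam (RBF.of G) (RBF.of H)) := by
  match F, G, H with
  | .cons T x F0, G, H =>
      rw [mul_cons_left, mul_consmap_left, assoc_basis lam F0 G H, ← mul_cons_left]
  | .single T, .cons T' y G0, H =>
      rw [mul_single_cons, mul_concat_left, mul_cons_left, mul_single_concat]
  | .single T, .single T', .cons T'' z H0 =>
      rw [mul_cons_right, assoc_basis lam (.single T) (.single T') (.single T''),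
        mul_cons_right, mul_single_concat]
  | .single .leaf, .single T', .single T'' =>
      rw [show RBF.of (AForest.single ATree.leaf) = (RBF.one : RBF k X) from rfl,
        mul_one_left, mul_one_left]
  | .single (.graft A), .single .leaf, .single T'' =>
      rw [show RBF.of (AForest.single ATree.leaf) = (RBF.one : RBF k X) from rfl,
        mul_one_right, mul_one_left]
  | .single (.graft A), .single (.graft B), .single .leaf =>
      rw [show RBF.of (AForest.single ATree.leaf) = (RBF.one : RBF k X) from rfl,
        mul_one_right, mul_one_right]
  | .single (.graft A), .single (.graft B), .single (.graft C) =>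
      have hA := Bplus_of (k:=k) A
      have hB := Bplus_of (k:=k) B
      have hC := Bplus_of (k:=k) C
      have i1 := assoc_basis lam A (.single (.graft B)) (.single (.graft C))
      rw [← hB, ← hC] at i1
      have i2 := assoc_basis lam (.single (.graft A)) B (.single (.graft C))
      rw [← hA, ← hC] at i2
      have i3 := assoc_basis lam A B (.single (.graft C))
      rw [← hC] at i3
      have i4 := assoc_basis lam A (.single (.graft B)) C
      rw [← hB] at i4
      have i5 := assoc_basis lam (.single (.graft A)) B C
      rw [← hA] at i5
      have i6 := assoc_basis lam A B C
      have i7 := assoc_basis lam (.single (.graft A)) (.single (.graft B)) C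
      rw [← hA, ← hB] at i7
      have hexp : RBF.mul lam (RBF.Bplus (RBF.of A))
            (RBF.mul lam (RBF.Bplus (RBF.of B)) (RBF.of C))
          = RBF.mul lam (RBF.Bplus (RBF.mul lam (RBF.of A) (RBF.Bplus (RBF.of B))))
              (RBF.of C)
            + RBF.mul lam (RBF.Bplus (RBF.mul lam (RBF.Bplus (RBF.of A)) (RBF.of B)))
              (RBF.of C)
            + lam • RBF.mul lam (RBF.Bplus (RBF.mul lam (RBF.of A) (RBF.of B)))
              (RBF.of C) := by
        rw [← i7, rb lam (RBF.of A) (RBF.of B)]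
        simp only [map_add, LinearMap.add_apply, map_smul, LinearMap.smul_apply]
      rw [← hA, ← hB, ← hC]
      simp only [rb, i1, i2, i3, i4, i5, i6, hexp, map_add, LinearMap.add_apply,
        map_smul, LinearMap.smul_apply, smul_add, smul_smul]
      module
termination_by (AForest.depth F + AForest.depth G + AForest.depth H,
  AForest.size F + AForest.size G + AForest.size H)
decreasing_by
  all_goals
    first
    | (apply natlex_of_le_of_lt
       · simp only [ATree.depth, AForest.depth]
         omega
       · simp only [ATree.size, AForest.size]
         first
         | omega
         | (have := AForest.size_pos H0; omega))
    | (apply Prod.Lex.left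
       simp only [ATree.depth, AForest.depth]
       omega)

section Final
variable {k X : Type} [CommRing k]

theorem mul_assoc_gen (lam : k) (a b c : RBF k X) :
    RBF.mul lam (RBF.mul lam a b) c = RBF.mul lam a (RBF.mul lam b c) := by
  induction a using Finsupp.induction_linear with
  | zero => simp
  | add f g hf hg => simp only [map_add, LinearMap.add_apply, hf, hg]
  | single F cF =>
    induction b using Finsupp.induction_linear with
    | zero => simp
    | add f g hf hg => simp only [map_add, LinearMap.add_apply, hf, hg]
    | single G cG =>
      induction c using Finsupp.induction_linear with
      | zero => simp
      | add f g hf hg => simp only [map_add, LinearMap.add_apply, hf, hg]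
      | single H cH =>
        simp only [single_eq_smul_of, map_smul, LinearMap.smul_apply, assoc_basis]
end Final

/-- The triple `(kF_X^a, ⋄ₐ, B⁺)` is a (non-commutative) unitary
Rota-Baxter algebra of weight `λ` with unit the single-vertex tree `•`: `⋄ₐ` is an
associative `k`-bilinear multiplication on `kF_X^a` with two-sided unit `•`, and the
grafting operator `B⁺` satisfies the Rota-Baxter equation
`B⁺(F) ⋄ₐ B⁺(F') = B⁺(F ⋄ₐ B⁺(F')) + B⁺(B⁺(F) ⋄ₐ F') + λ B⁺(F ⋄ₐ F')`. -/
theorem rbf_is_rota_baxter_algebra (k X : Type) [CommRing k] (lam : k) :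
    (∀ a b c : RBF k X,
        RBF.mul lam (RBF.mul lam a b) c = RBF.mul lam a (RBF.mul lam b c))
    ∧ (∀ a : RBF k X, RBF.mul lam RBF.one a = a ∧ RBF.mul lam a RBF.one = a)
    ∧ (∀ a b : RBF k X,
        RBF.mul lam (RBF.Bplus a) (RBF.Bplus b)
          = RBF.Bplus (RBF.mul lam a (RBF.Bplus b))
            + RBF.Bplus (RBF.mul lam (RBF.Bplus a) b)
            + lam • RBF.Bplus (RBF.mul lam a b)) := by
  refine ⟨fun a b c => mul_assoc_gen lam a b c,
    fun a => ⟨mul_one_left lam a, mul_one_right lam a⟩,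
    fun a b => rb lam a b⟩
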